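/- Let R_{1*} be the object representing X ↦ Hom_𝓒(T(X), 1*), realized as the cokernel of n : (P ⊠ P)^{⊕|N|} → P ⊠ P*. Then for every endomorphism u : P → P one has cok(n) ∘ (u ⊠ id_{P*} − id_P ⊠ u*) = 0; consequently, for any natural transformation ν of the identity functor of 𝓒, (ν ⊠ id)_{R_{1*}} = (id ⊠ ν̃)_{R_{1*}}, where ν̃_U = δ_U⁻¹ ∘ (ν_{U*})* ∘ δ_U. -/

import Mathlib

open CategoryTheory CategoryTheory.Limits

/-- The subspace `N = {f : P ⊠ P → P ⊠ P* | β_P ∘ T(f) = 0}`.  Here `Q` plays the role of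
`P ⊠ P`, `Q'` of `P ⊠ P*`, and `βmap : T(Q') → 1*` of the canonical pairing `β_P`. -/
def opeKer (kk : Type*) [Field kk] {C D : Type*} [Category C] [Category D]
    [Preadditive C] [Preadditive D]
    [CategoryTheory.Linear kk C] [CategoryTheory.Linear kk D]
    (T : D ⥤ C) [T.Additive] [T.Linear kk]
    (Q Q' : D) {I : C} (βmap : T.obj Q' ⟶ I) : Submodule kk (Q ⟶ Q') where
  carrier := {g | T.map g ≫ βmap = 0}
  zero_mem' := by simp
  add_mem' := by
    intro a b ha hb
    simp only [Set.mem_setOf_eq] at ha hb ⊢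
    rw [Functor.map_add, Preadditive.add_comp, ha, hb, add_zero]
  smul_mem' := by
    intro c a ha
    simp only [Set.mem_setOf_eq] at ha ⊢
    rw [Functor.map_smul, CategoryTheory.Linear.smul_comp, ha, smul_zero]

/-- Let `R_{1*}` be the representing object of `X ↦ Hom(T X, 1*)`, realized as the cokernel
of `n : (P ⊠ P)^{⊕|N|} → P ⊠ P*` (with `n` built from a basis of `N`).  Here `PP` plays the
role of `P ⊠ P`, `PPs` of `P ⊠ P*`, `l u` of `u ⊠ id_{P*}` and `r u` of `id_P ⊠ u*`
(morphisms of `D = 𝓒 ⊠ 𝓒ʳᵉᵛ` induced from `u : P → P`), and `βmap` of the canonical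
pairing `β_P`, so that `β_P ∘ (u ⊗ id) = β_P ∘ (id ⊗ u*)` is the hypothesis `hβ`.
Then (i) `cok(n) ∘ (u ⊠ id − id ⊠ u*) = 0` for every `u : P → P`; and (ii) for any natural
transformation `ν` of the identity functor of `𝓒`, the induced natural transformations
`ν ⊠ id` and `id ⊠ ν̃` of the identity functor of `D` (which on `P ⊠ P*` are given by
`ν_P ⊠ id` and `id ⊠ (ν_P)*`, since `ν̃_{U*} = (ν_U)*`) agree on `R_{1*}`. -/
theorem cokernel_kills_difference_and_trivial_twist
    {k : Type*} [Field k] {C D : Type*} [Category C] [Category D]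
    [Preadditive C] [Preadditive D]
    [CategoryTheory.Linear k C] [CategoryTheory.Linear k D]
    [Abelian D] [HasFiniteBiproducts D]
    (T : D ⥤ C) [T.Additive] [T.Linear k]
    (P : C) (PP PPs : D) (I : C) (βmap : T.obj PPs ⟶ I)
    (l r : (P ⟶ P) → (PPs ⟶ PPs))
    (hβ : ∀ u : P ⟶ P, T.map (l u) ≫ βmap = T.map (r u) ≫ βmap)
    (hproj : ∃ (m : ℕ) (s : (⨁ fun _ : Fin m => PP) ⟶ PPs), Epi s)
    (d : ℕ) (b : Module.Basis (Fin d) k (opeKer k T PP PPs βmap)) :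
    (∀ u : P ⟶ P,
      (l u - r u) ≫ cokernel.π
        (biproduct.desc (fun i => ((b i : opeKer k T PP PPs βmap) : PP ⟶ PPs))) = 0)
    ∧ (∀ (ν : 𝟭 C ⟶ 𝟭 C) (ν₁ ν₂ : 𝟭 D ⟶ 𝟭 D),
        ν₁.app PPs = l (ν.app P) → ν₂.app PPs = r (ν.app P) →
        ν₁.app (cokernel
            (biproduct.desc (fun i => ((b i : opeKer k T PP PPs βmap) : PP ⟶ PPs))))
          = ν₂.app (cokernel
            (biproduct.desc (fun i => ((b i : opeKer k T PP PPs βmap) : PP ⟶ PPs))))) := by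

  classical
  set n := biproduct.desc (fun i => ((b i : opeKer k T PP PPs βmap) : PP ⟶ PPs)) with hn
  have hbasis : ∀ i : Fin d,
      ((b i : opeKer k T PP PPs βmap) : PP ⟶ PPs) ≫ cokernel.π n = 0 := by
    intro i
    have h2 : biproduct.ι (fun _ : Fin d => PP) i ≫ n ≫ cokernel.π n = 0 := by
      rw [cokernel.condition, comp_zero]
    rw [← Category.assoc, hn, biproduct.ι_desc] at h2
    exact h2
  have key : ∀ G : opeKer k T PP PPs βmap, (G : PP ⟶ PPs) ≫ cokernel.π n = 0 := by
    intro G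
    have hG : (G : PP ⟶ PPs) =
        ∑ i : Fin d, b.repr G i • ((b i : opeKer k T PP PPs βmap) : PP ⟶ PPs) := by
      conv_lhs => rw [← b.sum_repr G]
      push_cast [Submodule.coe_sum]
      rfl
    rw [hG, Preadditive.sum_comp]
    refine Finset.sum_eq_zero fun i _ => ?_
    rw [CategoryTheory.Linear.smul_comp, hbasis, smul_zero]
  have part1 : ∀ u : P ⟶ P, (l u - r u) ≫ cokernel.π n = 0 := by
    intro u
    obtain ⟨m, s, hs⟩ := hproj
    rw [← cancel_epi s]
    apply biproduct.hom_ext'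
    intro j
    have hmem : (biproduct.ι (fun _ : Fin m => PP) j ≫ s ≫ (l u - r u))
        ∈ opeKer k T PP PPs βmap := by
      show T.map _ ≫ βmap = 0
      rw [← Category.assoc, Functor.map_comp, Functor.map_sub, Category.assoc,
        Preadditive.sub_comp, Preadditive.comp_sub, hβ u, sub_self]
    have hk := key ⟨_, hmem⟩
    simp only [Submodule.coe_mk] at hk
    simpa only [Category.assoc, comp_zero] using hk
  refine ⟨part1, ?_⟩
  intro ν ν₁ ν₂ h₁ h₂
  have nat₁ := ν₁.naturality (cokernel.π n)
  have nat₂ := ν₂.naturality (cokernel.π n)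
  simp only [Functor.id_obj, Functor.id_map] at nat₁ nat₂
  rw [h₁] at nat₁
  rw [h₂] at nat₂
  rw [← cancel_epi (cokernel.π n), nat₁, nat₂]
  have h3 := part1 (ν.app P)
  rw [Preadditive.sub_comp, sub_eq_zero] at h3
  exact h3
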